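/- If M is S-Mittag-Leffler with respect to a class Q of R-modules, then M is S-Mittag-Leffler with respect to the class of all pure submodules of modules in Q. -/

import Mathlib

/-- The canonical map `M ⊗[R] (∀ i, N i) →ₗ[R] ∀ i, M ⊗[R] N i`. -/
noncomputable def tensorPiMap (R : Type*) [CommRing R] (M : Type*) [AddCommGroup M]
    [Module R M] {ι : Type*} (N : ι → Type*) [∀ i, AddCommGroup (N i)]
    [∀ i, Module R (N i)] :
    (TensorProduct R M (∀ i, N i)) →ₗ[R] (∀ i, TensorProduct R M (N i)) :=
  LinearMap.pi fun i => LinearMap.lTensor M (LinearMap.proj i)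

/-- `M` is `S`-Mittag-Leffler with respect to a class `Q` of `R`-modules if for every
family of modules in `Q`, the canonical map `M ⊗ ∏ Qᵢ → ∏ (M ⊗ Qᵢ)` has `S`-torsion kernel. -/
def IsSMittagLeffler (R : Type) [CommRing R] (S : Submonoid R) (M : Type) [AddCommGroup M]
    [Module R M] (Q : ModuleCat R → Prop) : Prop :=
  ∀ (ι : Type) (N : ι → ModuleCat R), (∀ i, Q (N i)) →
    ∀ x ∈ LinearMap.ker (tensorPiMap R M fun i => (N i : Type)), ∃ s ∈ S, s • x = 0

/-- `P` is (isomorphic to) a pure submodule of some module in `Q`: there is a monomorphism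
`P → Q₀` with `Q₀ ∈ Q` which stays injective after tensoring with any module `N`. -/
def IsPureSubmoduleOf {R : Type} [CommRing R] (Q : ModuleCat R → Prop)
    (P : ModuleCat R) : Prop :=
  ∃ Q₀ : ModuleCat R, Q Q₀ ∧ ∃ f : P →ₗ[R] Q₀, Function.Injective f ∧
    ∀ N : ModuleCat R, Function.Injective (LinearMap.lTensor (N : Type) f)

open TensorProduct LinearMap Function

section Aux
variable {R : Type} [CommRing R]

/-- Equation lifting along a pure monomorphism. -/
lemma pure_equation_lift {P Q : Type} [AddCommGroup P] [Module R P]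
    [AddCommGroup Q] [Module R Q] (f : P →ₗ[R] Q)
    (hf : ∀ (N : Type) [AddCommGroup N] [Module R N],
      Function.Injective (LinearMap.lTensor N f))
    {ι κ : Type} [Fintype ι] [Fintype κ]
    (a : ι → κ → R) (p : ι → P) (q : κ → Q)
    (h : ∀ i, f (p i) = ∑ j, a i j • q j) :
    ∃ p' : κ → P, ∀ i, p i = ∑ j, a i j • p' j := by
  classical
  set U : Submodule R (ι → R) := Submodule.span R (Set.range fun j i => a i j) with hU
  set m : ι → (ι → R) ⧸ U := fun i => U.mkQ (Pi.single i 1) with hm'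
  have hsingle : ∀ (b : ι → R), (∑ i, b i • (Pi.single i 1 : ι → R)) = b := by
    intro b
    funext x
    rw [Finset.sum_apply]
    simp [Pi.single_apply]
  have hm : Submodule.span R (Set.range m) = ⊤ := by
    have h1 : Set.range m = U.mkQ '' (Set.range fun i => (Pi.single i 1 : ι → R)) := by
      rw [← Set.range_comp]; rfl
    have h2 : Submodule.span R (Set.range fun i => (Pi.single i 1 : ι → R)) = ⊤ := by
      rw [eq_top_iff]
      intro b _
      rw [← hsingle b]
      exact Submodule.sum_mem _ fun i _ => Submodule.smul_mem _ _
        (Submodule.subset_span ⟨i, rfl⟩)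
    rw [h1, Submodule.span_image, h2, Submodule.map_top, Submodule.range_mkQ]
  -- the element ∑ m i ⊗ p i vanishes
  have hcol : ∀ j, (∑ i, a i j • m i) = 0 := by
    intro j
    have : (∑ i, a i j • m i) = U.mkQ (∑ i, a i j • (Pi.single i 1 : ι → R)) := by
      simp [hm', map_sum]
    rw [this, hsingle fun i => a i j]
    exact (Submodule.Quotient.mk_eq_zero U).mpr (Submodule.subset_span ⟨j, rfl⟩)
  have ht : (∑ i, m i ⊗ₜ[R] p i) = 0 := by
    apply hf ((ι → R) ⧸ U)
    rw [map_sum, map_zero]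
    simp only [lTensor_tmul]
    calc ∑ i, m i ⊗ₜ[R] f (p i) = ∑ i, ∑ j, m i ⊗ₜ[R] (a i j • q j) := by
            simp_rw [h, tmul_sum]
      _ = ∑ j, (∑ i, a i j • m i) ⊗ₜ[R] q j := by
            rw [Finset.sum_comm]
            simp_rw [tmul_smul, smul_tmul', ← sum_tmul]
      _ = 0 := by simp [hcol]
  have hvan := vanishesTrivially_of_sum_tmul_eq_zero R hm ht
  obtain ⟨κ', b, y, h1, h2⟩ := hvan
  have hmem : ∀ j' : Fin κ', (fun i => b i j') ∈ U := by
    intro j'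
    have : U.mkQ (∑ i, b i j' • (Pi.single i 1 : ι → R)) = 0 := by
      rw [map_sum]
      simpa [hm'] using h2 j'
    rw [hsingle fun i => b i j'] at this
    exact (Submodule.Quotient.mk_eq_zero U).mp this
  choose c hc using fun j' => (Submodule.mem_span_range_iff_exists_fun R).mp (hmem j')
  refine ⟨fun j => ∑ j', c j' j • y j', fun i => ?_⟩
  rw [h1 i]
  have hbc : ∀ (j' : Fin κ'), ∑ j, c j' j * a i j = b i j' := by
    intro j'
    have := congrFun (hc j') i
    simpa [Finset.sum_apply] using this
  calc ∑ j' : Fin κ', b i j' • y j'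
      = ∑ j' : Fin κ', (∑ j, c j' j * a i j) • y j' := by simp_rw [hbc]
    _ = ∑ j' : Fin κ', ∑ j, (a i j * c j' j) • y j' := by
        simp_rw [Finset.sum_smul, mul_comm]
    _ = ∑ j, ∑ j' : Fin κ', (a i j * c j' j) • y j' := Finset.sum_comm
    _ = ∑ j, a i j • ∑ j' : Fin κ', c j' j • y j' := by
        simp_rw [Finset.smul_sum, mul_smul]


/-- A product of pure monomorphisms is pure: tensoring with any `M` stays injective. -/
lemma pi_map_pure_injective (M : Type) [AddCommGroup M] [Module R M]
    {ι : Type} (P Q : ι → Type) [∀ i, AddCommGroup (P i)] [∀ i, Module R (P i)]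
    [∀ i, AddCommGroup (Q i)] [∀ i, Module R (Q i)]
    (f : ∀ i, P i →ₗ[R] Q i)
    (hf : ∀ i (N : Type) [AddCommGroup N] [Module R N],
      Function.Injective (LinearMap.lTensor N (f i))) :
    Function.Injective
      (LinearMap.lTensor M (LinearMap.pi fun i => f i ∘ₗ LinearMap.proj i)) := by
  classical
  set g : (∀ i, P i) →ₗ[R] (∀ i, Q i) := LinearMap.pi fun i => f i ∘ₗ LinearMap.proj i with hg
  rw [← LinearMap.ker_eq_bot]
  rw [Submodule.eq_bot_iff]
  intro z hz
  rw [LinearMap.mem_ker] at hz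
  obtain ⟨Λ, π, hπ, -⟩ : ∃ (Λ : Type) (π : (Λ →₀ R) →ₗ[R] M),
      Function.Surjective π ∧ True :=
    ⟨M, Finsupp.linearCombination R _root_.id,
      Finsupp.linearCombination_id_surjective R M, trivial⟩
  obtain ⟨z', hz'⟩ := LinearMap.rTensor_surjective (∀ i, P i) hπ z
  -- the image of z' in (Λ →₀ R) ⊗ ∏ Q lies in the image of (ker π) ⊗ ∏ Q
  have hcomm : (rTensor (∀ i, Q i) π) ((lTensor (Λ →₀ R) g) z') = 0 := by
    have : (rTensor (∀ i, Q i) π) ∘ₗ (lTensor (Λ →₀ R) g)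
        = (lTensor M g) ∘ₗ (rTensor (∀ i, P i) π) := by
      rw [LinearMap.rTensor_comp_lTensor, LinearMap.lTensor_comp_rTensor]
    have := LinearMap.congr_fun this z'
    simp only [LinearMap.comp_apply] at this
    rw [this, hz', hz]
  have hexact := rTensor_exact (R := R) (M := ↥(LinearMap.ker π)) (N := Λ →₀ R) (P := M) (Q := ∀ i, Q i)
    (f := (LinearMap.ker π).subtype) (g := π) (LinearMap.exact_subtype_ker_map π) hπ
  obtain ⟨w, hw⟩ := (hexact _).mp hcomm
  obtain ⟨Sr, hSr⟩ := TensorProduct.exists_finset z'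
  obtain ⟨T, hT⟩ := TensorProduct.exists_finset w
  -- coordinate extraction
  set L : Λ → ((Λ →₀ R) ⊗[R] (∀ i, Q i)) →ₗ[R] (∀ i, Q i) :=
    fun lam => (TensorProduct.lid R (∀ i, Q i)).toLinearMap ∘ₗ
      rTensor (∀ i, Q i) (Finsupp.lapply lam) with hL
  have hLtmul : ∀ (lam : Λ) (u : Λ →₀ R) (x : ∀ i, Q i), L lam (u ⊗ₜ[R] x) = u lam • x := by
    intro lam u x
    simp [hL, Finsupp.lapply]
  have hkey : ∀ lam : Λ,
      (∑ r ∈ Sr, r.1 lam • g r.2) = ∑ t ∈ T, ((t.1 : Λ →₀ R) lam • t.2) := by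
    intro lam
    have h1 : (lTensor (Λ →₀ R) g) z' = ∑ r ∈ Sr, r.1 ⊗ₜ[R] g r.2 := by
      rw [hSr, map_sum]; simp [lTensor_tmul]
    have h2 : (rTensor (∀ i, Q i) (LinearMap.ker π).subtype) w
        = ∑ t ∈ T, (t.1 : Λ →₀ R) ⊗ₜ[R] t.2 := by
      rw [hT, map_sum]; simp [rTensor_tmul]
    have := congrArg (L lam) (hw.symm.trans h2 |>.symm.trans h1).symm
    rw [map_sum, map_sum] at this
    simp only [hLtmul] at this
    exact this
  -- supports
  set Λ₀ : Finset Λ := Sr.sup (fun r => r.1.support) ∪ T.sup (fun t => (t.1 : Λ →₀ R).support)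
    with hΛ₀
  have hsuppS : ∀ r ∈ Sr, r.1.support ⊆ Λ₀ := fun r hr =>
    Finset.Subset.trans (Finset.le_sup (f := fun r => r.1.support) hr)
      Finset.subset_union_left
  have hsuppT : ∀ t ∈ T, (t.1 : Λ →₀ R).support ⊆ Λ₀ := fun t ht =>
    Finset.Subset.trans (Finset.le_sup (f := fun t => (t.1 : Λ →₀ R).support) ht)
      Finset.subset_union_right
  -- componentwise equation lifting using purity of each `f c`
  have hlift : ∀ c : ι, ∃ p' : {t // t ∈ T} → P c,
      ∀ lam : {x // x ∈ Λ₀}, (∑ r ∈ Sr, r.1 lam.1 • r.2 c)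
        = ∑ t : {t // t ∈ T}, ((t.1.1 : Λ →₀ R) lam.1) • p' t := by
    intro c
    refine pure_equation_lift (f c) (hf c)
      (fun (lam : {x // x ∈ Λ₀}) (t : {t // t ∈ T}) => (t.1.1 : Λ →₀ R) lam.1)
      (fun lam => ∑ r ∈ Sr, r.1 lam.1 • r.2 c)
      (fun t => t.1.2 c) ?_
    intro lam
    have hc := congrFun (hkey lam.1) c
    rw [Finset.sum_apply, Finset.sum_apply] at hc
    simp only [Pi.smul_apply] at hc
    have hgc : ∀ r : (Λ →₀ R) × (∀ i, P i), g r.2 c = f c (r.2 c) := by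
      intro r; simp [hg]
    simp only [hgc] at hc
    rw [map_sum]
    simp only [map_smul]
    rw [hc, ← Finset.sum_coe_sort T]
  choose p' hp' using hlift
  have hmid : ∀ lam ∈ Λ₀, (∑ r ∈ Sr, r.1 lam • r.2)
      = ∑ t : {t // t ∈ T}, ((t.1.1 : Λ →₀ R) lam) • (fun c => p' c t) := by
    intro lam hlam
    funext c
    rw [Finset.sum_apply, Finset.sum_apply]
    simp only [Pi.smul_apply]
    exact hp' c ⟨lam, hlam⟩
  -- decomposition of finitely supported functions
  have hdecomp : ∀ (u : Λ →₀ R), u.support ⊆ Λ₀ →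
      u = ∑ lam ∈ Λ₀, u lam • Finsupp.single lam (1 : R) := by
    intro u hu
    ext x
    rw [Finsupp.finset_sum_apply]
    simp only [Finsupp.smul_single, smul_eq_mul, mul_one, Finsupp.single_apply,
      Finset.sum_ite_eq']
    by_cases hx : x ∈ Λ₀
    · rw [if_pos hx]
    · rw [if_neg hx]
      exact Finsupp.notMem_support_iff.mp fun hmem => hx (hu hmem)
  have hrep : ∀ (u : Λ →₀ R), u.support ⊆ Λ₀ →
      π u = ∑ lam ∈ Λ₀, u lam • π (Finsupp.single lam 1) := by
    intro u hu
    conv_lhs => rw [hdecomp u hu]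
    rw [map_sum]
    simp_rw [map_smul]
  -- final computation
  calc z = ∑ r ∈ Sr, π r.1 ⊗ₜ[R] r.2 := by
            rw [← hz', hSr, map_sum]; simp only [rTensor_tmul]
    _ = ∑ r ∈ Sr, ∑ lam ∈ Λ₀, π (Finsupp.single lam 1) ⊗ₜ[R] (r.1 lam • r.2) := by
          refine Finset.sum_congr rfl fun r hr => ?_
          rw [hrep r.1 (hsuppS r hr), sum_tmul]
          refine Finset.sum_congr rfl fun lam _ => ?_
          rw [smul_tmul]
    _ = ∑ lam ∈ Λ₀, π (Finsupp.single lam 1) ⊗ₜ[R] (∑ r ∈ Sr, r.1 lam • r.2) := by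
          rw [Finset.sum_comm]
          simp_rw [tmul_sum]
    _ = ∑ lam ∈ Λ₀, ∑ t : {t // t ∈ T},
          π (Finsupp.single lam 1) ⊗ₜ[R] (((t.1.1 : Λ →₀ R) lam) • fun c => p' c t) := by
          refine Finset.sum_congr rfl fun lam hlam => ?_
          rw [hmid lam hlam, tmul_sum]
    _ = ∑ t : {t // t ∈ T}, (∑ lam ∈ Λ₀, (t.1.1 : Λ →₀ R) lam • π (Finsupp.single lam 1))
          ⊗ₜ[R] (fun c => p' c t) := by
          rw [Finset.sum_comm]
          refine Finset.sum_congr rfl fun t _ => ?_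
          rw [sum_tmul]
          refine Finset.sum_congr rfl fun lam _ => ?_
          rw [smul_tmul]
    _ = 0 := by
          refine Finset.sum_eq_zero fun t _ => ?_
          rw [← hrep _ (hsuppT t.1 t.2)]
          rw [show π (t.1.1 : Λ →₀ R) = 0 from t.1.1.2, zero_tmul]

end Aux

theorem s_mittagLeffler_pure_submodules {R : Type} [CommRing R] (S : Submonoid R)
    {M : Type} [AddCommGroup M] [Module R M] (Q : ModuleCat R → Prop)
    (hM : IsSMittagLeffler R S M Q) :
    IsSMittagLeffler R S M (IsPureSubmoduleOf Q) := by
  intro ι N hN x hx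
  choose Q₀ hQ₀ f hfinj hfpure using hN
  set g : (∀ i, (N i : Type)) →ₗ[R] (∀ i, (Q₀ i : Type)) :=
    LinearMap.pi fun i => f i ∘ₗ LinearMap.proj i with hg
  rw [LinearMap.mem_ker] at hx
  have hy : (tensorPiMap R M fun i => (Q₀ i : Type)) (LinearMap.lTensor M g x) = 0 := by
    funext i
    show LinearMap.lTensor M (LinearMap.proj i) (LinearMap.lTensor M g x) = 0
    rw [← LinearMap.comp_apply, ← LinearMap.lTensor_comp]
    have hcomp : (LinearMap.proj i) ∘ₗ g = (f i) ∘ₗ (LinearMap.proj i) := rfl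
    rw [hcomp, LinearMap.lTensor_comp, LinearMap.comp_apply]
    rw [show LinearMap.lTensor M (LinearMap.proj i) x = 0 from congrFun hx i, map_zero]
  obtain ⟨s, hs, hsy⟩ := hM ι Q₀ hQ₀ (LinearMap.lTensor M g x) (LinearMap.mem_ker.mpr hy)
  refine ⟨s, hs, ?_⟩
  have hinj := pi_map_pure_injective M (fun i => (N i : Type)) (fun i => (Q₀ i : Type)) f
    (by intro i N' _ _; exact hfpure i (ModuleCat.of R N'))
  apply hinj
  show (LinearMap.lTensor M g) (s • x) = (LinearMap.lTensor M g) 0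
  rw [map_smul, hsy, map_zero]
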